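/- arXiv:0902.4332 — 2 statements merged into one kernel-verified Lean document; each statement's English description precedes it below -/
import Mathlib

section
/- Let ℓ be a prime, n ≥ 1, and q ∈ (Z/ℓ^n)^× with q = 1 in Z/ℓ^n. Then the number of matrices in GL₂(Z/ℓ^n) conjugate to some matrix of the form [[1, w],[0, 1]] with w ∈ Z/ℓ^n equals ℓ^{2n}. -/
namespace Stmt11aux

variable {ℓ : ℕ} (hℓ : ℓ.Prime)

section basic
variable (m : ℕ)

def L (x : ZMod (ℓ ^ m)) : ZMod (ℓ ^ (m+1)) := (x.val : ZMod (ℓ ^ (m+1)))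

def ι (x : ZMod (ℓ ^ m)) : ZMod (ℓ ^ (m+1)) := (ℓ : ZMod (ℓ ^ (m+1))) * L m x

/-- reduction ring hom -/
def red : ZMod (ℓ ^ (m+1)) →+* ZMod (ℓ ^ m) :=
  ZMod.castHom (pow_dvd_pow ℓ (Nat.le_succ m)) (ZMod (ℓ ^ m))


variable {m}
include hℓ

lemma pow_pos' (k : ℕ) : 0 < ℓ ^ k := pow_pos hℓ.pos k

lemma red_apply (y : ZMod (ℓ ^ (m+1))) : red m y = (y.val : ZMod (ℓ ^ m)) := by
  haveI : NeZero (ℓ ^ (m+1)) := ⟨(pow_pos' hℓ (m+1)).ne'⟩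
  rw [red, ZMod.castHom_apply, ← ZMod.natCast_val]

lemma keyC {a : ZMod (ℓ ^ m)} {x : ZMod (ℓ ^ (m+1))} (h : red m x = a) :
    (ℓ : ZMod (ℓ ^ (m+1))) * x = ι m a := by
  haveI : NeZero (ℓ ^ m) := ⟨(pow_pos' hℓ m).ne'⟩
  haveI : NeZero (ℓ ^ (m+1)) := ⟨(pow_pos' hℓ (m+1)).ne'⟩
  rw [red_apply hℓ] at h
  subst h
  unfold ι L
  have hx : ((x.val : ℕ) : ZMod (ℓ ^ (m+1))) = x := by
    rw [ZMod.natCast_val, ZMod.cast_id]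
  rw [ZMod.val_natCast]
  conv_lhs => rw [← hx]
  rw [← Nat.cast_mul, ← Nat.cast_mul, ZMod.natCast_eq_natCast_iff]
  have := (Nat.mod_modEq x.val (ℓ ^ m)).symm
  have h2 := Nat.ModEq.mul_left' (c := ℓ) this
  rwa [← pow_succ'] at h2

lemma red_L (a : ZMod (ℓ ^ m)) : red m (L m a) = a := by
  haveI : NeZero (ℓ ^ m) := ⟨(pow_pos' hℓ m).ne'⟩
  haveI : NeZero (ℓ ^ (m+1)) := ⟨(pow_pos' hℓ (m+1)).ne'⟩
  rw [red_apply hℓ]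
  unfold L
  rw [ZMod.val_natCast, Nat.mod_eq_of_lt, ZMod.natCast_val, ZMod.cast_id]
  exact lt_of_lt_of_le (ZMod.val_lt a) (Nat.pow_le_pow_right hℓ.pos (Nat.le_succ m))

lemma ι_inj : Function.Injective (ι (ℓ := ℓ) m) := by
  haveI : NeZero (ℓ ^ m) := ⟨(pow_pos' hℓ m).ne'⟩
  haveI : NeZero (ℓ ^ (m+1)) := ⟨(pow_pos' hℓ (m+1)).ne'⟩
  intro a b hab
  unfold ι L at hab
  rw [← Nat.cast_mul, ← Nat.cast_mul, ZMod.natCast_eq_natCast_iff] at hab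
  have h2 : a.val ≡ b.val [MOD ℓ ^ m] := by
    have := (Nat.modEq_iff_dvd).mp hab
    rw [Nat.modEq_iff_dvd]
    push_cast at this ⊢
    rw [pow_succ'] at this
    have hll : (ℓ : ℤ) ≠ 0 := by exact_mod_cast hℓ.ne_zero
    rw [show ((ℓ:ℤ) * b.val - ℓ * a.val) = ℓ * (b.val - a.val) by ring] at this
    exact (mul_dvd_mul_iff_left hll).mp this
  have ha := ZMod.val_lt a
  have hb := ZMod.val_lt b
  have : a.val = b.val := by
    unfold Nat.ModEq at h2
    rwa [Nat.mod_eq_of_lt ha, Nat.mod_eq_of_lt hb] at h2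
  have := congrArg (fun k : ℕ => (k : ZMod (ℓ ^ m))) this
  simpa [ZMod.natCast_val, ZMod.cast_id] using this

lemma not_isUnit_ell {k : ℕ} (hk : 1 ≤ k) : ¬ IsUnit ((ℓ : ZMod (ℓ ^ k))) := by
  haveI : NeZero (ℓ ^ k) := ⟨(pow_pos' hℓ k).ne'⟩
  rw [ZMod.isUnit_iff_coprime]
  intro h
  have : ℓ ∣ ℓ ^ k := dvd_pow_self ℓ (by omega)
  exact hℓ.one_lt.ne' (Nat.Coprime.eq_one_of_dvd h this)

lemma nonunit_eq_ell_mul {k : ℕ} {x : ZMod (ℓ ^ k)} (hx : ¬ IsUnit x) :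
    ∃ y, x = (ℓ : ZMod (ℓ ^ k)) * y := by
  haveI : NeZero (ℓ ^ k) := ⟨(pow_pos' hℓ k).ne'⟩
  have hdvd : ℓ ∣ x.val := by
    by_contra hnd
    apply hx
    have h1 : Nat.Coprime x.val (ℓ ^ k) :=
      Nat.Coprime.pow_right k ((Nat.Prime.coprime_iff_not_dvd hℓ).mpr hnd).symm
    have := (ZMod.isUnit_iff_coprime x.val (ℓ ^ k)).mpr h1
    rwa [ZMod.natCast_val, ZMod.cast_id] at this
  obtain ⟨y, hy⟩ := hdvd
  refine ⟨(y : ZMod (ℓ ^ k)), ?_⟩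
  have : ((x.val : ℕ) : ZMod (ℓ ^ k)) = x := by rw [ZMod.natCast_val, ZMod.cast_id]
  rw [← this, hy]
  push_cast
  ring

lemma not_isUnit_ell_mul {k : ℕ} (hk : 1 ≤ k) (z : ZMod (ℓ ^ k)) :
    ¬ IsUnit ((ℓ : ZMod (ℓ ^ k)) * z) := fun h =>
  not_isUnit_ell hℓ hk (isUnit_of_mul_isUnit_left h)

lemma not_isUnit_ι (a : ZMod (ℓ ^ m)) : ¬ IsUnit (ι m a) :=
  not_isUnit_ell_mul hℓ (Nat.le_add_left 1 m) _

end basic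

section forms

def Aform {R : Type*} [CommRing R] (s t : R) : Matrix (Fin 2) (Fin 2) R :=
  !![-(s*t), t; -(s*s*t), s*t]

def Bform {R : Type*} [CommRing R] (r t : R) : Matrix (Fin 2) (Fin 2) R :=
  !![r*t, -(r*r*t); t, -(r*t)]

def Fpred {R : Type*} [CommRing R] (N : Matrix (Fin 2) (Fin 2) R) : Prop :=
  (∃ s t, N = Aform s t) ∨ (∃ r t, N = Bform r t)

lemma Bform_eq_Aform {R : Type*} [CommRing R] {r s : R} (t : R) (h : s * r = 1) :
    Bform r t = Aform s (-(r*r*t)) := by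
  unfold Aform Bform
  ext i j
  fin_cases i <;> fin_cases j <;> simp
  all_goals (try linear_combination (-(r*t)) * h)
  all_goals linear_combination (-(s*r*t) - t) * h

@[simp] lemma Aform01 {R : Type*} [CommRing R] (s t : R) : Aform s t 0 1 = t := by
  simp [Aform]
@[simp] lemma Aform00 {R : Type*} [CommRing R] (s t : R) : Aform s t 0 0 = -(s*t) := by
  simp [Aform]
@[simp] lemma Bform10 {R : Type*} [CommRing R] (r t : R) : Bform r t 1 0 = t := by
  simp [Bform]
@[simp] lemma Bform01 {R : Type*} [CommRing R] (r t : R) : Bform r t 0 1 = -(r*r*t) := by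
  simp [Bform]
@[simp] lemma Bform00 {R : Type*} [CommRing R] (r t : R) : Bform r t 0 0 = r*t := by
  simp [Bform]

variable {m : ℕ}
include hℓ

lemma Aform_ell (s x : ZMod (ℓ ^ (m+1))) :
    Aform s ((ℓ : ZMod (ℓ ^ (m+1))) * x) = (Aform (red m s) (red m x)).map (ι m) := by
  have h1 : (ℓ : ZMod (ℓ ^ (m+1))) * (-(s*x)) = ι m (-(red m s * red m x)) :=
    keyC hℓ (by simp)
  have h2 : (ℓ : ZMod (ℓ ^ (m+1))) * x = ι m (red m x) := keyC hℓ rfl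
  have h3 : (ℓ : ZMod (ℓ ^ (m+1))) * (-(s*s*x)) = ι m (-(red m s * red m s * red m x)) :=
    keyC hℓ (by simp)
  have h4 : (ℓ : ZMod (ℓ ^ (m+1))) * (s*x) = ι m (red m s * red m x) :=
    keyC hℓ (by simp)
  unfold Aform
  ext i j
  fin_cases i <;> fin_cases j <;> simp [Matrix.map_apply]
  · rw [← h1]; ring
  · rw [← h2]
  · rw [← h3]; ring
  · rw [← h4]; ring

lemma Bform_ell (r x : ZMod (ℓ ^ (m+1))) :
    Bform r ((ℓ : ZMod (ℓ ^ (m+1))) * x) = (Bform (red m r) (red m x)).map (ι m) := by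
  have h1 : (ℓ : ZMod (ℓ ^ (m+1))) * (r*x) = ι m (red m r * red m x) :=
    keyC hℓ (by simp)
  have h2 : (ℓ : ZMod (ℓ ^ (m+1))) * (-(r*r*x)) = ι m (-(red m r * red m r * red m x)) :=
    keyC hℓ (by simp)
  have h3 : (ℓ : ZMod (ℓ ^ (m+1))) * x = ι m (red m x) := keyC hℓ rfl
  have h4 : (ℓ : ZMod (ℓ ^ (m+1))) * (-(r*x)) = ι m (-(red m r * red m x)) :=
    keyC hℓ (by simp)
  unfold Bform
  ext i j
  fin_cases i <;> fin_cases j <;> simp [Matrix.map_apply]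
  · rw [← h1]; ring
  · rw [← h2]; ring
  · rw [← h3]
  · rw [← h4]; ring

end forms



section count
include hℓ

theorem card_F (m : ℕ) :
    Nat.card {N : Matrix (Fin 2) (Fin 2) (ZMod (ℓ ^ m)) // Fpred N} = ℓ ^ (2*m) := by
  induction m with
  | zero =>
    haveI : Subsingleton (ZMod (ℓ ^ 0)) := by
      simp only [pow_zero]
      infer_instance
    haveI : Subsingleton (Matrix (Fin 2) (Fin 2) (ZMod (ℓ ^ 0))) :=
      ⟨fun a b => by ext i j; exact Subsingleton.elim _ _⟩
    haveI : Unique {N : Matrix (Fin 2) (Fin 2) (ZMod (ℓ ^ 0)) // Fpred N} :=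
      uniqueOfSubsingleton ⟨Aform 0 0, Or.inl ⟨0, 0, rfl⟩⟩
    rw [Nat.card_unique, Nat.mul_zero, pow_zero]
  | succ m ih =>
    haveI : NeZero (ℓ ^ m) := ⟨(pow_pos' hℓ m).ne'⟩
    haveI : NeZero (ℓ ^ (m+1)) := ⟨(pow_pos' hℓ (m+1)).ne'⟩
    set f1 : ZMod (ℓ^(m+1)) × (ZMod (ℓ^(m+1)))ˣ → Matrix (Fin 2) (Fin 2) (ZMod (ℓ^(m+1))) :=
      fun p => Aform p.1 (↑p.2) with hf1
    set f2 : ZMod (ℓ^m) × (ZMod (ℓ^(m+1)))ˣ → Matrix (Fin 2) (Fin 2) (ZMod (ℓ^(m+1))) :=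
      fun p => Bform (ι m p.1) (↑p.2) with hf2
    set f3 : {N : Matrix (Fin 2) (Fin 2) (ZMod (ℓ^m)) // Fpred N} →
        Matrix (Fin 2) (Fin 2) (ZMod (ℓ^(m+1))) :=
      fun p => p.val.map (ι m) with hf3
    have cover : {N : Matrix (Fin 2) (Fin 2) (ZMod (ℓ^(m+1))) | Fpred N} =
        (Set.range f1 ∪ Set.range f2) ∪ Set.range f3 := by
      ext N
      simp only [Set.mem_setOf_eq, Set.mem_union, Set.mem_range]
      constructor
      · rintro (⟨s, t, rfl⟩ | ⟨r, t, rfl⟩)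
        · by_cases ht : IsUnit t
          · exact Or.inl (Or.inl ⟨(s, ht.unit), by simp [hf1]⟩)
          · obtain ⟨x, rfl⟩ := nonunit_eq_ell_mul hℓ ht
            exact Or.inr ⟨⟨Aform (red m s) (red m x), Or.inl ⟨_, _, rfl⟩⟩,
              (Aform_ell hℓ s x).symm⟩
        · by_cases ht : IsUnit t
          · by_cases hr : IsUnit r
            · obtain ⟨v, hv⟩ := hr
              refine Or.inl (Or.inl ⟨((↑v⁻¹ : ZMod (ℓ^(m+1))), -(v * v * ht.unit)), ?_⟩)
              have h : (↑v⁻¹ : ZMod (ℓ^(m+1))) * r = 1 := by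
                rw [← hv]; exact v.inv_mul
              simp only [hf1, Units.val_neg, Units.val_mul, hv, ht.unit_spec]
              exact (Bform_eq_Aform t h).symm
            · obtain ⟨y, rfl⟩ := nonunit_eq_ell_mul hℓ hr
              refine Or.inl (Or.inr ⟨(red m y, ht.unit), ?_⟩)
              simp only [hf2, ht.unit_spec]
              rw [← keyC hℓ rfl]
          · obtain ⟨x, rfl⟩ := nonunit_eq_ell_mul hℓ ht
            exact Or.inr ⟨⟨Bform (red m r) (red m x), Or.inr ⟨_, _, rfl⟩⟩,
              (Bform_ell hℓ r x).symm⟩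
      · rintro ((⟨⟨s, u⟩, rfl⟩ | ⟨⟨ρ, u⟩, rfl⟩) | ⟨⟨N', hN'⟩, rfl⟩)
        · exact Or.inl ⟨s, u, rfl⟩
        · exact Or.inr ⟨ι m ρ, u, rfl⟩
        · rcases hN' with ⟨s', t', rfl⟩ | ⟨r', t', rfl⟩
          · refine Or.inl ⟨L m s', (ℓ : ZMod (ℓ^(m+1))) * L m t', ?_⟩
            have h := Aform_ell hℓ (L m s') (L m t')
            rw [red_L hℓ, red_L hℓ] at h
            exact h.symm
          · refine Or.inr ⟨L m r', (ℓ : ZMod (ℓ^(m+1))) * L m t', ?_⟩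
            have h := Bform_ell hℓ (L m r') (L m t')
            rw [red_L hℓ, red_L hℓ] at h
            exact h.symm
    -- invariants
    have inv1 : ∀ z ∈ Set.range f1, IsUnit (z 0 1) := by
      rintro _ ⟨⟨s, u⟩, rfl⟩
      simpa [hf1] using u.isUnit
    have inv2a : ∀ z ∈ Set.range f2, ¬ IsUnit (z 0 1) := by
      rintro _ ⟨⟨ρ, u⟩, rfl⟩ h
      simp only [hf2, Bform01] at h
      rw [IsUnit.neg_iff] at h
      exact not_isUnit_ι hℓ ρ (isUnit_of_mul_isUnit_left (isUnit_of_mul_isUnit_left h))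
    have inv2b : ∀ z ∈ Set.range f2, IsUnit (z 1 0) := by
      rintro _ ⟨⟨ρ, u⟩, rfl⟩
      simpa [hf2] using u.isUnit
    have inv3 : ∀ z ∈ Set.range f3, ¬ IsUnit (z 0 1) ∧ ¬ IsUnit (z 1 0) := by
      rintro _ ⟨⟨N', hN'⟩, rfl⟩
      constructor <;>
      · simp only [hf3, Matrix.map_apply]
        exact not_isUnit_ι hℓ _
    have d12 : Disjoint (Set.range f1) (Set.range f2) :=
      Set.disjoint_left.mpr fun z h1 h2 => (inv2a z h2) (inv1 z h1)
    have dbig : Disjoint (Set.range f1 ∪ Set.range f2) (Set.range f3) := by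
      rw [Set.disjoint_union_left]
      constructor
      · exact Set.disjoint_left.mpr fun z h1 h3 => ((inv3 z h3).1) (inv1 z h1)
      · exact Set.disjoint_left.mpr fun z h2 h3 => ((inv3 z h3).2) (inv2b z h2)
    -- injectivity
    have hinj1 : Function.Injective f1 := by
      rintro ⟨s, u⟩ ⟨s', u'⟩ h
      simp only [hf1] at h
      have h01 : (↑u : ZMod (ℓ^(m+1))) = ↑u' := by
        have := congrFun (congrFun h 0) 1
        simpa using this
      have h00 : -(s * (↑u : ZMod (ℓ^(m+1)))) = -(s' * ↑u') := by
        have := congrFun (congrFun h 0) 0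
        simpa using this
      rw [← h01] at h00
      have hs : s = s' := by
        have := neg_injective h00
        exact (Units.mul_left_inj u).mp this
      exact Prod.ext hs (Units.ext h01)
    have hinj2 : Function.Injective f2 := by
      rintro ⟨ρ, u⟩ ⟨ρ', u'⟩ h
      simp only [hf2] at h
      have h10 : (↑u : ZMod (ℓ^(m+1))) = ↑u' := by
        have := congrFun (congrFun h 1) 0
        simpa using this
      have h00 : ι m ρ * (↑u : ZMod (ℓ^(m+1))) = ι m ρ' * ↑u' := by
        have := congrFun (congrFun h 0) 0
        simpa using this
      rw [← h10] at h00
      have := ι_inj hℓ ((Units.mul_left_inj u).mp h00)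
      exact Prod.ext this (Units.ext h10)
    have hinj3 : Function.Injective f3 := by
      rintro ⟨N, hN⟩ ⟨N', hN'⟩ h
      simp only [hf3] at h
      apply Subtype.ext
      show N = N'
      ext i j
      apply ι_inj hℓ
      have := congrFun (congrFun h i) j
      simpa [Matrix.map_apply] using this
    -- cardinalities
    have hcard : Nat.card ↥{N : Matrix (Fin 2) (Fin 2) (ZMod (ℓ^(m+1))) | Fpred N} =
        ℓ ^ (2*(m+1)) := by
      rw [Nat.card_coe_set_eq, cover,
        Set.ncard_union_eq dbig (Set.toFinite _) (Set.toFinite _),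
        Set.ncard_union_eq d12 (Set.toFinite _) (Set.toFinite _),
        ← Nat.card_coe_set_eq, ← Nat.card_coe_set_eq, ← Nat.card_coe_set_eq,
        Nat.card_range_of_injective hinj1, Nat.card_range_of_injective hinj2,
        Nat.card_range_of_injective hinj3,
        Nat.card_prod, Nat.card_prod, ih]
      rw [Nat.card_eq_fintype_card, Nat.card_eq_fintype_card (α := (ZMod (ℓ^(m+1)))ˣ),
        Nat.card_eq_fintype_card (α := ZMod (ℓ^m)),
        ZMod.card, ZMod.card, ZMod.card_units_eq_totient,
        Nat.totient_prime_pow hℓ (Nat.succ_pos m)]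
      obtain ⟨c, rfl⟩ := Nat.exists_eq_succ_of_ne_zero hℓ.ne_zero
      simp only [Nat.succ_sub_one, Nat.succ_eq_add_one]
      ring
    exact hcard

end count

section bridge
include hℓ

lemma bridge {k : ℕ} (hk : 1 ≤ k) (M : Matrix (Fin 2) (Fin 2) (ZMod (ℓ ^ k))) :
    (∃ (w : ZMod (ℓ ^ k)) (g : GL (Fin 2) (ZMod (ℓ ^ k))),
        (g : Matrix (Fin 2) (Fin 2) (ZMod (ℓ ^ k))) *
            (!![1, w; 0, (1 : ZMod (ℓ ^ k))]) *
            ((g⁻¹ : GL (Fin 2) (ZMod (ℓ ^ k))) : Matrix (Fin 2) (Fin 2) (ZMod (ℓ ^ k))) = M)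
      ↔ Fpred (M - 1) := by
  constructor
  · rintro ⟨w, g, rfl⟩
    set G := (g : Matrix (Fin 2) (Fin 2) (ZMod (ℓ ^ k))) with hG
    set H := ((g⁻¹ : GL (Fin 2) (ZMod (ℓ ^ k))) : Matrix (Fin 2) (Fin 2) (ZMod (ℓ ^ k)))
      with hH
    have hHG : H * G = 1 := by
      rw [hH, hG, ← Units.val_mul, inv_mul_cancel, Units.val_one]
    have hGH : G * H = 1 := by
      rw [hH, hG, ← Units.val_mul, mul_inv_cancel, Units.val_one]
    have hrel : H 1 0 * G 0 0 + H 1 1 * G 1 0 = 0 := by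
      have h2 := congrFun (congrFun hHG 1) 0
      rw [Matrix.mul_apply, Fin.sum_univ_two] at h2
      simpa [Matrix.one_apply] using h2
    have hone : H 0 0 * G 0 0 + H 0 1 * G 1 0 = 1 := by
      have h2 := congrFun (congrFun hHG 0) 0
      rw [Matrix.mul_apply, Fin.sum_univ_two] at h2
      simpa [Matrix.one_apply] using h2
    have hM : G * !![1, w; 0, (1 : ZMod (ℓ ^ k))] * H - 1 =
        !![G 0 0 * (w * H 1 0), G 0 0 * (w * H 1 1);
           G 1 0 * (w * H 1 0), G 1 0 * (w * H 1 1)] := by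
      have hU : (!![1, w; 0, (1 : ZMod (ℓ ^ k))]) = 1 + !![0, w; 0, 0] := by
        rw [Matrix.one_fin_two]
        ext i j
        fin_cases i <;> fin_cases j <;> simp
      rw [hU, mul_add, mul_one, add_mul, hGH, add_sub_cancel_left]
      rw [Matrix.eta_fin_two G, Matrix.eta_fin_two H]
      ext i j
      fin_cases i <;> fin_cases j <;>
        simp [Matrix.mul_apply, Fin.sum_univ_two] <;> ring
    rw [hM]
    have hcase : IsUnit (G 0 0) ∨ IsUnit (G 1 0) := by
      by_contra hc
      push_neg at hc
      obtain ⟨x, hx⟩ := nonunit_eq_ell_mul hℓ hc.1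
      obtain ⟨y, hy⟩ := nonunit_eq_ell_mul hℓ hc.2
      rw [hx, hy] at hone
      have h3 : (ℓ : ZMod (ℓ ^ k)) * (H 0 0 * x + H 0 1 * y) = 1 := by
        rw [← hone]; ring
      have h4 : IsUnit ((ℓ : ZMod (ℓ ^ k)) * (H 0 0 * x + H 0 1 * y)) := by
        rw [h3]; exact isUnit_one
      exact not_isUnit_ell hℓ hk (isUnit_of_mul_isUnit_left h4)
    rcases hcase with ⟨u, hu⟩ | ⟨u, hu⟩
    · have hq : (↑u⁻¹ : ZMod (ℓ ^ k)) * G 0 0 = 1 := by rw [← hu]; exact u.inv_mul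
      refine Or.inl ⟨G 1 0 * ↑u⁻¹, G 0 0 * (w * H 1 1), ?_⟩
      unfold Aform
      ext i j
      fin_cases i <;> fin_cases j
      · show G 0 0 * (w * H 1 0) = -(G 1 0 * ↑u⁻¹ * (G 0 0 * (w * H 1 1)))
        linear_combination w * hrel + (G 1 0 * w * H 1 1) * hq
      · show G 0 0 * (w * H 1 1) = G 0 0 * (w * H 1 1)
        rfl
      · show G 1 0 * (w * H 1 0) =
          -(G 1 0 * ↑u⁻¹ * (G 1 0 * ↑u⁻¹) * (G 0 0 * (w * H 1 1)))
        linear_combination (G 1 0 * ↑u⁻¹ * w) * hrel +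
          (G 1 0 * G 1 0 * ↑u⁻¹ * w * H 1 1 - G 1 0 * w * H 1 0) * hq
      · show G 1 0 * (w * H 1 1) = G 1 0 * ↑u⁻¹ * (G 0 0 * (w * H 1 1))
        linear_combination (-(G 1 0 * w * H 1 1)) * hq
    · have hq : (↑u⁻¹ : ZMod (ℓ ^ k)) * G 1 0 = 1 := by rw [← hu]; exact u.inv_mul
      refine Or.inr ⟨G 0 0 * ↑u⁻¹, G 1 0 * (w * H 1 0), ?_⟩
      unfold Bform
      ext i j
      fin_cases i <;> fin_cases j
      · show G 0 0 * (w * H 1 0) = G 0 0 * ↑u⁻¹ * (G 1 0 * (w * H 1 0))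
        linear_combination (-(G 0 0 * w * H 1 0)) * hq
      · show G 0 0 * (w * H 1 1) =
          -(G 0 0 * ↑u⁻¹ * (G 0 0 * ↑u⁻¹) * (G 1 0 * (w * H 1 0)))
        linear_combination (G 0 0 * ↑u⁻¹ * w) * hrel +
          (G 0 0 * G 0 0 * ↑u⁻¹ * w * H 1 0 - G 0 0 * w * H 1 1) * hq
      · show G 1 0 * (w * H 1 0) = G 1 0 * (w * H 1 0)
        rfl
      · show G 1 0 * (w * H 1 1) = -(G 0 0 * ↑u⁻¹ * (G 1 0 * (w * H 1 0)))
        linear_combination w * hrel + (G 0 0 * w * H 1 0) * hq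
  · rintro (⟨s, t, hA⟩ | ⟨r, t, hB⟩)
    · refine ⟨t, ⟨!![1, 0; s, 1], !![1, 0; -s, 1], ?_, ?_⟩, ?_⟩
      · ext i j
        fin_cases i <;> fin_cases j <;>
          simp [Matrix.mul_apply, Fin.sum_univ_two, Matrix.one_apply]
      · ext i j
        fin_cases i <;> fin_cases j <;>
          simp [Matrix.mul_apply, Fin.sum_univ_two, Matrix.one_apply]
      · have hM : M = Aform s t + 1 := by rw [← hA, sub_add_cancel]
        rw [hM]
        show !![1, 0; s, 1] * !![1, t; 0, 1] * !![1, 0; -s, 1] = Aform s t + 1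
        unfold Aform
        ext i j
        fin_cases i <;> fin_cases j <;>
          simp [Matrix.mul_apply, Fin.sum_univ_two, Matrix.one_apply] <;> ring
    · refine ⟨t, ⟨!![r, 1; 1, 0], !![0, 1; 1, -r], ?_, ?_⟩, ?_⟩
      · ext i j
        fin_cases i <;> fin_cases j <;>
          simp [Matrix.mul_apply, Fin.sum_univ_two, Matrix.one_apply]
      · ext i j
        fin_cases i <;> fin_cases j <;>
          simp [Matrix.mul_apply, Fin.sum_univ_two, Matrix.one_apply]
      · have hM : M = Bform r t + 1 := by rw [← hB, sub_add_cancel]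
        rw [hM]
        show !![r, 1; 1, 0] * !![1, t; 0, 1] * !![0, 1; 1, -r] = Bform r t + 1
        unfold Bform
        ext i j
        fin_cases i <;> fin_cases j <;>
          simp [Matrix.mul_apply, Fin.sum_univ_two, Matrix.one_apply] <;> ring

end bridge
end Stmt11aux


/-- The number of matrices in `GL₂(Z/ℓ^n)` conjugate to some `[[1, w],[0, 1]]`. -/
theorem stmt11 (ℓ : ℕ) (hℓ : ℓ.Prime) (n : ℕ) (hn : 1 ≤ n) :
    Nat.card {M : Matrix (Fin 2) (Fin 2) (ZMod (ℓ ^ n)) //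
        ∃ (w : ZMod (ℓ ^ n)) (g : GL (Fin 2) (ZMod (ℓ ^ n))),
          (g : Matrix (Fin 2) (Fin 2) (ZMod (ℓ ^ n))) *
              (!![1, w; 0, (1 : ZMod (ℓ ^ n))]) *
              ((g⁻¹ : GL (Fin 2) (ZMod (ℓ ^ n))) : Matrix (Fin 2) (Fin 2) (ZMod (ℓ ^ n))) =
            M} =
      ℓ ^ (2 * n) := by
  have e : {M : Matrix (Fin 2) (Fin 2) (ZMod (ℓ ^ n)) //
        ∃ (w : ZMod (ℓ ^ n)) (g : GL (Fin 2) (ZMod (ℓ ^ n))),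
          (g : Matrix (Fin 2) (Fin 2) (ZMod (ℓ ^ n))) *
              (!![1, w; 0, (1 : ZMod (ℓ ^ n))]) *
              ((g⁻¹ : GL (Fin 2) (ZMod (ℓ ^ n))) : Matrix (Fin 2) (Fin 2) (ZMod (ℓ ^ n))) =
            M} ≃ {N : Matrix (Fin 2) (Fin 2) (ZMod (ℓ ^ n)) // Stmt11aux.Fpred N} :=
    Equiv.subtypeEquiv (Equiv.subRight (1 : Matrix (Fin 2) (Fin 2) (ZMod (ℓ ^ n))))
      (fun M => Stmt11aux.bridge hℓ hn M)
  rw [Nat.card_congr e, Stmt11aux.card_F hℓ n]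
end

section
/- Let p ≥ 5 be a prime. The coefficient c_{A,B} ∈ F_p[A,B] of x^{p−1} in (x³ + Ax + B)^{(p−1)/2} is given by the sum over i from ⌈(p−1)/6⌉ to ⌊(p−1)/4⌋ of binom((p−1)/2, i)·binom(i, 3i − (p−1)/2)·A^{3i−(p−1)/2}·B^{(p−1)/2−2i}. In particular c_{A,B} is nonzero and homogeneous of weighted degree (p−1)/2 when A is given weight 2 and B weight 3. -/
open Polynomial Finset in
theorem key {R : Type*} [CommSemiring R] (a b : R) (m : ℕ) :
    Polynomial.coeff ((X ^ 3 + C a * X + C b : R[X]) ^ m) (2 * m) =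
      ∑ i ∈ Finset.Icc ((m + 2) / 3) (m / 2),
        ((m.choose i * i.choose (3 * i - m) : ℕ) : R) * a ^ (3 * i - m) * b ^ (m - 2 * i) := by
  have expand : (X ^ 3 + C a * X + C b : R[X]) ^ m =
      ∑ k ∈ range (m + 1), ∑ j ∈ range (m - k + 1),
        C (((m.choose k * (m - k).choose j : ℕ) : R) * a ^ j * b ^ (m - k - j)) *
          X ^ (3 * k + j) := by
    rw [add_assoc, add_pow]
    refine Finset.sum_congr rfl fun k hk => ?_
    rw [add_pow, Finset.mul_sum, Finset.sum_mul]
    refine Finset.sum_congr rfl fun j hj => ?_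
    simp only [mul_pow, ← Polynomial.C_eq_natCast, ← C_pow, Nat.cast_mul, C_mul, ← pow_mul]
    ring
  rw [expand, Polynomial.finset_sum_coeff]
  have h1 : ∀ k, (∑ j ∈ range (m - k + 1),
      C (((m.choose k * (m - k).choose j : ℕ) : R) * a ^ j * b ^ (m - k - j)) *
        X ^ (3 * k + j)).coeff (2 * m)
      = if m ≤ 2 * k ∧ 3 * k ≤ 2 * m then
          ((m.choose k * (m - k).choose (2 * m - 3 * k) : ℕ) : R) * a ^ (2 * m - 3 * k) *
            b ^ (m - k - (2 * m - 3 * k))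
        else 0 := by
    intro k
    rw [Polynomial.finset_sum_coeff]
    simp only [Polynomial.coeff_C_mul, Polynomial.coeff_X_pow, mul_ite, mul_one, mul_zero]
    by_cases h : m ≤ 2 * k ∧ 3 * k ≤ 2 * m
    · rw [Finset.sum_eq_single_of_mem (2 * m - 3 * k)
        (by simp only [Finset.mem_range]; omega)
        (fun j _ hj => if_neg (by omega)), if_pos (by omega), if_pos h]
    · rw [if_neg h, Finset.sum_eq_zero]
      intro j hj
      simp only [Finset.mem_range] at hj
      exact if_neg (by omega)
  simp only [h1, ← Finset.sum_filter]
  have hset : (range (m + 1)).filter (fun k => m ≤ 2 * k ∧ 3 * k ≤ 2 * m) =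
      Finset.Icc ((m + 1) / 2) (2 * m / 3) := by
    ext k; simp only [Finset.mem_filter, Finset.mem_range, Finset.mem_Icc]; omega
  rw [hset]
  refine Finset.sum_nbij' (fun k => m - k) (fun i => m - i) ?_ ?_ ?_ ?_ ?_
  · intro k hk; simp only [Finset.mem_Icc] at *; omega
  · intro i hi; simp only [Finset.mem_Icc] at *; omega
  · intro k hk; simp only [Finset.mem_Icc] at hk; show m - (m - k) = k; omega
  · intro i hi; simp only [Finset.mem_Icc] at hi; show m - (m - i) = i; omega
  · intro k hk
    simp only [Finset.mem_Icc] at hk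
    show _ = ((m.choose (m - k) * (m - k).choose (3 * (m - k) - m) : ℕ) : R) *
      a ^ (3 * (m - k) - m) * b ^ (m - 2 * (m - k))
    have h1 : m.choose k = m.choose (m - k) := by
      rw [Nat.choose_symm (by omega)]
    have h2 : 2 * m - 3 * k = 3 * (m - k) - m := by omega
    have h3 : m - k - (2 * m - 3 * k) = m - 2 * (m - k) := by omega
    rw [h1, h3, h2]

open MvPolynomial in
theorem mono {R : Type*} [CommSemiring R] (r : R) (u v : ℕ) :
    (MvPolynomial.C r * X 0 ^ u * X 1 ^ v : MvPolynomial (Fin 2) R) =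
      monomial (Finsupp.single 0 u + Finsupp.single 1 v) r := by
  rw [X_pow_eq_monomial, X_pow_eq_monomial, C_mul_monomial, monomial_mul, mul_one, mul_one]

open MvPolynomial in
/-- The coefficient `c_{A,B}` of `x^(p-1)` in `(x³ + Ax + B)^((p-1)/2)`: explicit formula,
nonvanishing, and weighted homogeneity of degree `(p-1)/2` for weights `2, 3`. -/
theorem stmt13 (p : ℕ) (hp : p.Prime) (hp5 : 5 ≤ p)
    (c : MvPolynomial (Fin 2) (ZMod p))
    (hc : c = (Polynomial.coeff
      ((Polynomial.X ^ 3 + Polynomial.C (X 0) * Polynomial.X +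
          Polynomial.C (X 1) : Polynomial (MvPolynomial (Fin 2) (ZMod p))) ^ ((p - 1) / 2))
      (p - 1))) :
    c = ∑ i ∈ Finset.Icc ((p + 4) / 6) ((p - 1) / 4),
        (C ((Nat.choose ((p - 1) / 2) i * Nat.choose i (3 * i - (p - 1) / 2) : ℕ) :
            ZMod p)) *
          X 0 ^ (3 * i - (p - 1) / 2) * X 1 ^ ((p - 1) / 2 - 2 * i) ∧
      c ≠ 0 ∧
      IsWeightedHomogeneous (fun j : Fin 2 => if j = 0 then 2 else 3) c ((p - 1) / 2) := by
  have hodd : p % 2 = 1 := Nat.odd_iff.mp (hp.odd_of_ne_two (by omega))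
  have h3 : p % 3 ≠ 0 := by
    intro h
    rcases (hp.eq_one_or_self_of_dvd 3 (Nat.dvd_of_mod_eq_zero h)) with h' | h' <;> omega
  set m := (p - 1) / 2 with hm
  have hpm : p - 1 = 2 * m := by omega
  have hr1 : (p + 4) / 6 = (m + 2) / 3 := by omega
  have hr2 : (p - 1) / 4 = m / 2 := by omega
  have hform : c = ∑ i ∈ Finset.Icc ((p + 4) / 6) ((p - 1) / 4),
      (C ((Nat.choose m i * Nat.choose i (3 * i - m) : ℕ) : ZMod p)) *
        X 0 ^ (3 * i - m) * X 1 ^ (m - 2 * i) := by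
    rw [hr1, hr2, hc, hpm, key]
    simp only [map_natCast]
  refine ⟨hform, ?_, ?_⟩
  · -- nonvanishing
    set i0 := m / 2 with hi0def
    have hi0 : i0 ∈ Finset.Icc ((p + 4) / 6) ((p - 1) / 4) := by
      simp only [Finset.mem_Icc]; omega
    set d : Fin 2 →₀ ℕ := Finsupp.single 0 (3 * i0 - m) + Finsupp.single 1 (m - 2 * i0) with hd
    have hcoeff : coeff d c = ((m.choose i0 * i0.choose (3 * i0 - m) : ℕ) : ZMod p) := by
      rw [hform, coeff_sum]
      rw [Finset.sum_eq_single_of_mem i0 hi0 ?_]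
      · rw [mono, coeff_monomial, if_pos rfl]
      · intro i hi hne
        rw [mono, coeff_monomial, if_neg]
        intro hEq
        apply hne
        have h0 := DFunLike.congr_fun hEq (0 : Fin 2)
        simp only [hd, Finsupp.add_apply, Finsupp.single_apply, if_pos rfl] at h0
        norm_num at h0
        simp only [Finset.mem_Icc] at hi
        omega
    have hne0 : coeff d c ≠ 0 := by
      rw [hcoeff]
      haveI : NeZero p := ⟨hp.pos.ne'⟩
      intro h0
      rw [ZMod.natCast_eq_zero_iff] at h0
      have hdvdfac : ∀ n k : ℕ, k ≤ n → p ∣ n.choose k → p ≤ n := by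
        intro n k hk hdvd
        have hcd : n.choose k ∣ n.factorial :=
          ⟨k.factorial * (n - k).factorial, by
            rw [← Nat.choose_mul_factorial_mul_factorial hk]; ring⟩
        exact (Nat.Prime.dvd_factorial hp).mp (hdvd.trans hcd)
      rcases (Nat.Prime.dvd_mul hp).mp h0 with h | h
      · have := hdvdfac m i0 (by omega) h; omega
      · have := hdvdfac i0 (3 * i0 - m) (by omega) h; omega
    intro hzero
    rw [hzero] at hne0
    simp at hne0
  · -- homogeneity
    rw [hform]
    apply IsWeightedHomogeneous.sum
    intro i hi
    rw [mono]
    apply isWeightedHomogeneous_monomial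
    simp only [Finset.mem_Icc] at hi
    rw [Finsupp.weight_apply, Finsupp.sum_add_index, Finsupp.sum_single_index,
      Finsupp.sum_single_index]
    · simp only [if_pos rfl, smul_eq_mul]
      norm_num
      omega
    · simp
    · simp
    · intro a _; simp
    · intro a _ b1 b2; split <;> ring
end
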